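/- Let T'' ≺ T' ≺ T be three topologies on a finite set X. Then T'/T'' ≺ T/T'', and the topologies T/T' and (T/T'')/(T'/T'') on X are equal. -/

import Mathlib

variable {X : Type*}

/-- The specialization quasi-order of a topology: `x ≤_T y` iff every
`T`-open set containing `x` contains `y`. -/
def leT (t : TopologicalSpace X) (x y : X) : Prop :=
  ∀ U : Set X, t.IsOpen U → x ∈ U → y ∈ U

/-- The specialization equivalence `∼_T`. -/
def simT (t : TopologicalSpace X) (x y : X) : Prop :=
  leT t x y ∧ leT t y x

/-- The topology of final segments of a relation `r`. -/
def topOfRel (r : X → X → Prop) : TopologicalSpace X where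
  IsOpen U := ∀ x ∈ U, ∀ y, r x y → y ∈ U
  isOpen_univ := fun _ _ y _ => Set.mem_univ y
  isOpen_inter := fun U V hU hV x hx y hr => ⟨hU x hx.1 y hr, hV x hx.2 y hr⟩
  isOpen_sUnion := fun S hS x hx y hr => by
    obtain ⟨U, hU, hxU⟩ := hx
    exact ⟨U, hU, hS U hU x hxU y hr⟩

/-- `T'` is finer than `T`: every `T`-open set is `T'`-open. -/
def finer (t' t : TopologicalSpace X) : Prop :=
  ∀ U : Set X, t.IsOpen U → t'.IsOpen U

/-- The quasi-order of the quotient topology `T/T'`: the transitive closure of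
`x R y ↔ (x ≤_T y or y ≤_{T'} x)`. -/
def quotRel (t t' : TopologicalSpace X) : X → X → Prop :=
  Relation.ReflTransGen (fun x y => leT t x y ∨ leT t' y x)

/-- The quotient topology `T/T'`. -/
def quotTop (t t' : TopologicalSpace X) : TopologicalSpace X :=
  topOfRel (quotRel t t')

/-- Restriction (subspace topology) of `t` to a subset `Y`. -/
def restrictT (t : TopologicalSpace X) (Y : Set X) : TopologicalSpace Y :=
  t.induced Subtype.val

/-- `T'` is `T`-admissible (`T' ⊚≺ T`). -/
def adm (t' t : TopologicalSpace X) : Prop :=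
  finer t' t ∧
  (∀ Y : Set X, @IsConnected X t' Y → restrictT t' Y = restrictT t Y) ∧
  (∀ x y : X,
    (quotRel t t' x y ∧ quotRel t t' y x) ↔ (quotRel t' t' x y ∧ quotRel t' t' y x))

lemma leT_mono {t t' : TopologicalSpace X} (h : finer t' t) {x y : X}
    (hl : leT t' x y) : leT t x y :=
  fun U hU => hl U (h U hU)

lemma leT_topOfRel (r : X → X → Prop) (x y : X) :
    leT (topOfRel r) x y ↔ Relation.ReflTransGen r x y := by
  constructor
  · intro h
    exact h {z | Relation.ReflTransGen r x z}
      (fun _ ha _ hb => ha.tail hb) Relation.ReflTransGen.refl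
  · intro h U hU hx
    induction h with
    | refl => exact hx
    | tail _ hbc ih => exact hU _ ih _ hbc

lemma leT_quotTop (t t' : TopologicalSpace X) (x y : X) :
    leT (quotTop t t') x y ↔ quotRel t t' x y := by
  rw [quotTop, leT_topOfRel, quotRel, Relation.reflTransGen_idem]

lemma quotRel_mono {t₁ t₁' t₂ t₂' : TopologicalSpace X}
    (h : finer t₂ t₁) (h' : finer t₂' t₁') {x y : X}
    (hr : quotRel t₂ t₂' x y) : quotRel t₁ t₁' x y :=
  Relation.ReflTransGen.mono
    (fun _ _ (hab : leT t₂ _ _ ∨ leT t₂' _ _) => hab.imp (leT_mono h) (leT_mono h')) _ _ hr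

lemma quotRel_quot {t t' t'' : TopologicalSpace X}
    (h1 : finer t' t) (h2 : finer t'' t') (x y : X) :
    quotRel (quotTop t t'') (quotTop t' t'') x y ↔ quotRel t t' x y := by
  constructor
  · intro h
    induction h with
    | refl => exact Relation.ReflTransGen.refl
    | tail _ hbc ih =>
      refine ih.trans ?_
      rcases hbc with hb | hc
      · -- quotRel t t'' b c ⊆ quotRel t t' b c
        exact Relation.ReflTransGen.mono
          (fun _ _ (hab : leT t _ _ ∨ leT t'' _ _) => hab.imp id (leT_mono h2)) _ _
          ((leT_quotTop t t'' _ _).mp hb)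
      · -- quotRel t' t'' c b, reversed gives quotRel t t' b c
        have hcb := (leT_quotTop t' t'' _ _).mp hc
        have : Relation.ReflTransGen
            (Function.swap (fun a b => leT t' a b ∨ leT t'' b a)) _ _ :=
          Relation.ReflTransGen.swap _ _ hcb
        refine Relation.ReflTransGen.mono ?_ _ _ this
        intro a b hab
        rcases hab with hba | hab
        · exact Or.inr hba
        · exact Or.inl (leT_mono h1 (leT_mono h2 hab))
  · intro h
    refine Relation.ReflTransGen.mono ?_ _ _ h
    intro a b hab
    rcases hab with hab | hba
    · exact Or.inl ((leT_quotTop t t'' a b).mpr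
        (Relation.ReflTransGen.single (Or.inl hab)))
    · exact Or.inr ((leT_quotTop t' t'' b a).mpr
        (Relation.ReflTransGen.single (Or.inl hba)))

/-- If T'' ≺ T' ≺ T then T'/T'' ≺ T/T'' and T/T' = (T/T'')/(T'/T''). -/
theorem quot_quot [Finite X] (t t' t'' : TopologicalSpace X)
    (h1 : finer t' t) (h2 : finer t'' t') :
    finer (quotTop t' t'') (quotTop t t'') ∧
    quotTop t t' = quotTop (quotTop t t'') (quotTop t' t'') := by
  constructor
  · intro U hU x hx y hr
    exact hU x hx y (quotRel_mono h1 (fun V hV => hV) hr)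
  · have : quotRel (quotTop t t'') (quotTop t' t'') = quotRel t t' := by
      funext x y
      exact propext (quotRel_quot h1 h2 x y)
    show topOfRel (quotRel t t') =
      topOfRel (quotRel (quotTop t t'') (quotTop t' t''))
    rw [this]
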